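/- In any MLL proof net Θ, if L is a ⊗-link with premises A and B, then the empires e_Θ(A) and e_Θ(B) are disjoint sets of formula occurrences. -/

import Mathlib

/-- An MLL link: an ID-link (axiom link) with two conclusions,
a tensor link or a par link with two premises and one conclusion. -/
inductive MLLLink (V : Type) where
  | idl (c₁ c₂ : V)
  | tensor (a b c : V)
  | par (a b c : V)
deriving DecidableEq

namespace MLLLink
variable {V V' : Type}

def prems : MLLLink V → List V
  | idl _ _ => []
  | tensor a b _ => [a, b]
  | par a b _ => [a, b]

def concls : MLLLink V → List V
  | idl c₁ c₂ => [c₁, c₂]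
  | tensor _ _ c => [c]
  | par _ _ c => [c]

def isId : MLLLink V → Bool
  | idl _ _ => true
  | _ => false

def isTensor : MLLLink V → Bool
  | tensor _ _ _ => true
  | _ => false

def isPar : MLLLink V → Bool
  | par _ _ _ => true
  | _ => false

/-- Relabel the vertices of a link along a map. -/
def map (f : V → V') : MLLLink V → MLLLink V'
  | idl c₁ c₂ => idl (f c₁) (f c₂)
  | tensor a b c => tensor (f a) (f b) (f c)
  | par a b c => par (f a) (f b) (f c)

/-- Forget whether a multiplicative link is ⊗ or ⅋ (normalizing ⅋ to ⊗). -/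
def forget : MLLLink V → MLLLink V
  | par a b c => tensor a b c
  | L => L

end MLLLink

/-- An MLL proof structure on the set `V` of formula occurrences:
every occurrence is the conclusion of exactly one link and the premise of
at most one link, and the occurrences appearing in a link are distinct. -/
structure MLLProofStructure (V : Type) [DecidableEq V] where
  links : Finset (MLLLink V)
  concl_exists : ∀ v : V, ∃ L ∈ links, v ∈ L.concls
  concl_unique : ∀ v : V, ∀ L ∈ links, ∀ L' ∈ links,
      v ∈ L.concls → v ∈ L'.concls → L = L'
  prem_unique : ∀ v : V, ∀ L ∈ links, ∀ L' ∈ links,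
      v ∈ L.prems → v ∈ L'.prems → L = L'
  nodup : ∀ L ∈ links, (L.prems ++ L.concls).Nodup

variable {V : Type} [DecidableEq V]

/-- The edge generated by a link under a DR-switching `S`
(`S L = true` selects the left premise of a ⅋-link). -/
def switchEdge (S : MLLLink V → Bool) (L : MLLLink V) (v w : V) : Prop :=
  match L with
  | .idl c₁ c₂ => v = c₁ ∧ w = c₂
  | .tensor a b c => (v = a ∧ w = c) ∨ (v = b ∧ w = c)
  | .par a b c =>
      (S (.par a b c) = true ∧ v = a ∧ w = c) ∨
      (S (.par a b c) = false ∧ v = b ∧ w = c)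

def drRel (Θ : MLLProofStructure V) (S : MLLLink V → Bool) (v w : V) : Prop :=
  ∃ L ∈ Θ.links, switchEdge S L v w

/-- The Danos–Regnier graph of a proof structure under a switching. -/
def drGraph (Θ : MLLProofStructure V) (S : MLLLink V → Bool) : SimpleGraph V :=
  SimpleGraph.fromRel (drRel Θ S)

/-- Danos–Regnier criterion: a proof net is a proof structure all of whose
DR-graphs are acyclic and connected. -/
def IsProofNet (Θ : MLLProofStructure V) : Prop :=
  ∀ S : MLLLink V → Bool, (drGraph Θ S).IsAcyclic ∧ (drGraph Θ S).Connected

/-- The edges from `A` down to the conclusion of the link of which `A` is a premise. -/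
def belowEdges (Θ : MLLProofStructure V) (A : V) : Set (Sym2 V) :=
  {e | ∃ L ∈ Θ.links, A ∈ L.prems ∧ ∃ c ∈ L.concls, e = s(A, c)}

/-- The DR-graph with the edge below `A` deleted. -/
def empGraph (Θ : MLLProofStructure V) (S : MLLLink V → Bool) (A : V) : SimpleGraph V :=
  (drGraph Θ S).deleteEdges (belowEdges Θ A)

/-- The vertex set of `Θ_S^A`: the connected component of `A` in the DR-graph
after deleting the edge below `A`. -/
def empComp (Θ : MLLProofStructure V) (S : MLLLink V → Bool) (A : V) : Set V :=
  {v | (empGraph Θ S A).Reachable A v}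

/-- The empire of `A` in `Θ`. -/
def empire (Θ : MLLProofStructure V) (A : V) : Set V :=
  ⋂ S : MLLLink V → Bool, empComp Θ S A

/-- A conclusion of `Θ` is a formula occurrence which is a premise of no link. -/
def IsConclusion (Θ : MLLProofStructure V) (v : V) : Prop :=
  ∀ L ∈ Θ.links, v ∉ L.prems

/-- All premises and conclusions of a link lie in `X`. -/
def allIn (X : Set V) (L : MLLLink V) : Prop :=
  (∀ w ∈ L.prems, w ∈ X) ∧ (∀ w ∈ L.concls, w ∈ X)

/-- `X` together with the links of `Θ` contained in `X` forms a proof structure. -/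
def IsSubProofStructure (Θ : MLLProofStructure V) (X : Set V) : Prop :=
  ∀ v ∈ X, ∃ L ∈ Θ.links, v ∈ L.concls ∧ allIn X L

def subDrRel (Θ : MLLProofStructure V) (X : Set V) (S : MLLLink V → Bool)
    (v w : V) : Prop :=
  ∃ L ∈ Θ.links, allIn X L ∧ switchEdge S L v w

/-- The DR-graph of the substructure of `Θ` induced on `X`. -/
def subDrGraph (Θ : MLLProofStructure V) (X : Set V) (S : MLLLink V → Bool) :
    SimpleGraph V :=
  SimpleGraph.fromRel (subDrRel Θ X S)

/-- `X` is a sub-proof net of `Θ`: it induces a proof structure whose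
DR-graphs are all acyclic and connected (on `X`). -/
def IsSubProofNet (Θ : MLLProofStructure V) (X : Set V) : Prop :=
  IsSubProofStructure Θ X ∧
    ∀ S : MLLLink V → Bool, (subDrGraph Θ X S).IsAcyclic ∧
      ∀ v ∈ X, ∀ w ∈ X, (subDrGraph Θ X S).Reachable v w

/-- `A` is a conclusion of the substructure induced on `X`. -/
def IsConclusionOfSub (Θ : MLLProofStructure V) (X : Set V) (A : V) : Prop :=
  A ∈ X ∧ ∀ L ∈ Θ.links, allIn X L → A ∉ L.prems

/-- `e` is an isomorphism of the underlying link graphs of `Θ₁` and `Θ₂`,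
forgetting the ⊗/⅋ labels: they witness that `Θ₁` and `Θ₂` are in the same PS-family. -/
def FamilyIso {V₁ V₂ : Type} [DecidableEq V₁] [DecidableEq V₂]
    (Θ₁ : MLLProofStructure V₁) (Θ₂ : MLLProofStructure V₂) (e : V₁ ≃ V₂) : Prop :=
  Θ₁.links.image (fun L => (L.map e).forget) = Θ₂.links.image MLLLink.forget

/-- The number of (multiplicative) links at which the ⊗/⅋-labellings of
`Θ₁` and `Θ₂` differ along `e`. -/
def diffCount {V₁ V₂ : Type} [DecidableEq V₁] [DecidableEq V₂]
    (Θ₁ : MLLProofStructure V₁) (Θ₂ : MLLProofStructure V₂) (e : V₁ ≃ V₂) : ℕ :=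
  (Θ₁.links.filter (fun L => L.map e ∉ Θ₂.links)).card


section Aux
open SimpleGraph

lemma walk_avoid_or_through {V : Type} {G : SimpleGraph V} {e f : Sym2 V} {A : V}
    (hA : ∀ x y : V, s(x, y) = e → x = A ∨ y = A) :
    ∀ {u v : V} (p : (G.deleteEdges {f}).Walk u v),
      A ∈ p.support ∨ (G.deleteEdges {e}).Reachable u v := by
  intro u v p
  induction p with
  | nil => exact Or.inr (Reachable.refl _)
  | @cons u u' v h q ih =>
    by_cases he : s(u, u') = e
    · rcases hA u u' he with rfl | rfl
      · exact Or.inl (by simp [SimpleGraph.Walk.support_cons])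
      · exact Or.inl (by simp [SimpleGraph.Walk.support_cons,
          SimpleGraph.Walk.start_mem_support])
    · have hadj : (G.deleteEdges {e}).Adj u u' := by
        rw [SimpleGraph.deleteEdges_adj] at h ⊢
        exact ⟨h.1, by simpa using he⟩
      rcases ih with hl | hr
      · exact Or.inl (by simp [SimpleGraph.Walk.support_cons, hl])
      · exact Or.inr (hadj.reachable.trans hr)

end Aux

/-- In an MLL proof net, the empires of the two premises of a ⊗-link are disjoint. -/

theorem tensor_empires_disjoint (Θ : MLLProofStructure V) (hΘ : IsProofNet Θ)
    (A B C : V) (hL : MLLLink.tensor A B C ∈ Θ.links) :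
    empire Θ A ∩ empire Θ B = ∅ := by
  classical
  -- basic distinctness
  have hnd := Θ.nodup _ hL
  simp [MLLLink.prems, MLLLink.concls] at hnd
  obtain ⟨⟨hAB, hAC⟩, hBC⟩ := hnd
  -- belowEdges computations
  have hbelow : ∀ X : V, X ∈ (MLLLink.tensor A B C : MLLLink V).prems →
      belowEdges Θ X = {s(X, C)} := by
    intro X hX
    ext e
    constructor
    · rintro ⟨L, hLmem, hXp, c, hc, rfl⟩
      have : L = MLLLink.tensor A B C := Θ.prem_unique X L hLmem _ hL hXp hX
      subst this
      simp [MLLLink.concls] at hc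
      subst hc; rfl
    · rintro (rfl : e = s(X, C))
      exact ⟨_, hL, hX, C, by simp [MLLLink.concls], rfl⟩
  have hbA : belowEdges Θ A = {s(A, C)} := hbelow A (by simp [MLLLink.prems])
  have hbB : belowEdges Θ B = {s(B, C)} := hbelow B (by simp [MLLLink.prems])
  -- pick a switching
  set S : MLLLink V → Bool := fun _ => true with hS
  set G : SimpleGraph V := drGraph Θ S with hG
  have hadjAC : G.Adj A C := by
    rw [hG, drGraph, SimpleGraph.fromRel_adj]
    exact ⟨hAC, Or.inl ⟨_, hL, Or.inl ⟨rfl, rfl⟩⟩⟩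
  have hadjBC : G.Adj B C := by
    rw [hG, drGraph, SimpleGraph.fromRel_adj]
    exact ⟨hBC, Or.inl ⟨_, hL, Or.inr ⟨rfl, rfl⟩⟩⟩
  have hac : G.IsAcyclic := (hΘ S).1
  have hbridge := SimpleGraph.isAcyclic_iff_forall_adj_isBridge.mp hac
  have hnrAC : ¬ (G.deleteEdges {s(A, C)}).Reachable A C :=
    (SimpleGraph.isBridge_iff.mp (hbridge hadjAC))
  have hnrBC : ¬ (G.deleteEdges {s(B, C)}).Reachable B C :=
    (SimpleGraph.isBridge_iff.mp (hbridge hadjBC))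
  have hsymne : (s(B, C) : Sym2 V) ≠ s(A, C) := by
    simp [Sym2.eq_iff]
    tauto
  have hadjAC' : (G.deleteEdges {s(B, C)}).Adj A C := by
    rw [SimpleGraph.deleteEdges_adj]
    refine ⟨hadjAC, ?_⟩
    simp [Sym2.eq_iff]
    tauto
  have hadjBC' : (G.deleteEdges {s(A, C)}).Adj B C := by
    rw [SimpleGraph.deleteEdges_adj]
    exact ⟨hadjBC, by simpa using hsymne⟩
  -- main argument
  ext v
  simp only [Set.mem_inter_iff, Set.mem_empty_iff_false, iff_false, not_and]
  intro hvA hvB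
  have h1 : (G.deleteEdges {s(A, C)}).Reachable A v := by
    have := Set.mem_iInter.mp hvA S
    rwa [empComp, Set.mem_setOf_eq, empGraph, hbA] at this
  have h2 : (G.deleteEdges {s(B, C)}).Reachable B v := by
    have := Set.mem_iInter.mp hvB S
    rwa [empComp, Set.mem_setOf_eq, empGraph, hbB] at this
  have hAform : ∀ x y : V, s(x, y) = s(A, C) → x = A ∨ y = A := by
    intro x y h
    rw [Sym2.eq_iff] at h
    rcases h with ⟨rfl, rfl⟩ | ⟨rfl, rfl⟩
    · exact Or.inl rfl
    · exact Or.inr rfl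
  obtain ⟨p⟩ := h2
  rcases walk_avoid_or_through (G := G) (e := s(A, C)) (f := s(B, C)) hAform p with hsup | hreach
  · -- B reaches A in G minus BC, so B reaches C there: contradiction
    have hBA : (G.deleteEdges {s(B, C)}).Reachable B A := ⟨p.takeUntil A hsup⟩
    exact hnrBC (hBA.trans hadjAC'.reachable)
  · -- B reaches v in G minus AC; so A reaches C via v, B: contradiction
    exact hnrAC ((h1.trans hreach.symm).trans hadjBC'.reachable)
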